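/- For k algebraically closed and n ≥ 1, PGL(n+1,k) is a simple group. -/

import Mathlib

open Matrix
set_option linter.unusedSectionVars false
namespace Stmt19
variable {k : Type*} [Field k] {ι : Type*} [Fintype ι] [DecidableEq ι]

lemma vmv_mul_vmv (u r u' r' : ι → k) :
    vecMulVec u r * vecMulVec u' r' = (r ⬝ᵥ u') • vecMulVec u r' := by
  ext x y
  simp only [mul_apply, vecMulVec_apply, Matrix.smul_apply, dotProduct, smul_eq_mul, Finset.mul_sum,
    Finset.sum_mul]
  apply Finset.sum_congr rfl; intros; ring

lemma mul_vmv (M : Matrix ι ι k) (u r : ι → k) :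
    M * vecMulVec u r = vecMulVec (M *ᵥ u) r := by
  ext x y
  simp only [mul_apply, vecMulVec_apply, mulVec, dotProduct, Finset.sum_mul]
  apply Finset.sum_congr rfl; intros; ring

lemma vmv_mul (M : Matrix ι ι k) (u r : ι → k) :
    vecMulVec u r * M = vecMulVec u (r ᵥ* M) := by
  ext x y
  simp only [mul_apply, vecMulVec_apply, vecMul, dotProduct, Finset.mul_sum]
  apply Finset.sum_congr rfl; intros; ring

lemma vmv_smul_left (c : k) (u r : ι → k) :
    vecMulVec (c • u) r = vecMulVec u (c • r) := by
  ext x y; simp [vecMulVec_apply]; ring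

lemma vmv_add_right (u r s : ι → k) :
    vecMulVec u r + vecMulVec u s = vecMulVec u (r + s) := by
  ext x y; simp [vecMulVec_apply]; ring

lemma vmv_mulVec (u r x : ι → k) : vecMulVec u r *ᵥ x = (r ⬝ᵥ x) • u := by
  ext i; simp only [mulVec, vecMulVec_apply, dotProduct, Pi.smul_apply, smul_eq_mul,
    Finset.sum_mul, Finset.mul_sum]
  apply Finset.sum_congr rfl; intros; ring

/-- the transvection-like unit 1 + u rᵀ with r ⬝ᵥ u = 0 -/
def tvU (u r : ι → k) (h : r ⬝ᵥ u = 0) : (Matrix ι ι k)ˣ where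
  val := 1 + vecMulVec u r
  inv := 1 - vecMulVec u r
  val_inv := by
    have h0 : vecMulVec u r * vecMulVec u r = 0 := by rw [vmv_mul_vmv, h, zero_smul]
    simp only [mul_sub, add_mul, sub_mul, one_mul, mul_one, h0]; abel
  inv_val := by
    have h0 : vecMulVec u r * vecMulVec u r = 0 := by rw [vmv_mul_vmv, h, zero_smul]
    simp only [mul_sub, add_mul, sub_mul, mul_add, one_mul, mul_one, h0]; abel

@[simp] lemma tvU_val (u r : ι → k) (h) : (tvU u r h : Matrix ι ι k) = 1 + vecMulVec u r := rfl

lemma tvU_mul (u r s : ι → k) (h : r ⬝ᵥ u = 0) (h' : s ⬝ᵥ u = 0) :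
    tvU u r h * tvU u s h' = tvU u (r + s) (by simp [add_dotProduct, h, h']) := by
  ext1
  have h0 : vecMulVec u r * vecMulVec u s = 0 := by rw [vmv_mul_vmv, h, zero_smul]
  push_cast [tvU_val]
  simp only [mul_add, add_mul, one_mul, mul_one, h0, ← vmv_add_right]; abel

lemma tvU_comm (u r s : ι → k) (h : r ⬝ᵥ u = 0) (h' : s ⬝ᵥ u = 0) :
    tvU u r h * tvU u s h' = tvU u s h' * tvU u r h := by
  rw [tvU_mul, tvU_mul]; congr 1; abel

lemma tvU_smul (c : k) (u r : ι → k) (h : r ⬝ᵥ (c • u) = 0) :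
    tvU (c • u) r h = tvU u (c • r) (by
      rwa [dotProduct_smul, ← smul_dotProduct] at h) := by
  ext1; simp [tvU_val, vmv_smul_left]

lemma tvU_conj (g : (Matrix ι ι k)ˣ) (u r : ι → k) (h : r ⬝ᵥ u = 0) :
    g * tvU u r h * g⁻¹ = tvU ((g : Matrix ι ι k) *ᵥ u) (r ᵥ* (g⁻¹ : (Matrix ι ι k)ˣ))
      (by rw [dotProduct_mulVec, Matrix.vecMul_vecMul]
          rw [Units.inv_mul, Matrix.vecMul_one, h]) := by
  ext1
  simp only [Units.val_mul, tvU_val]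
  rw [mul_add, add_mul, mul_one, Units.mul_inv, mul_vmv, vmv_mul]

/-- general rank one update unit -/
def rkU (u r : ι → k) (h : 1 + r ⬝ᵥ u ≠ 0) : (Matrix ι ι k)ˣ where
  val := 1 + vecMulVec u r
  inv := 1 - (1 + r ⬝ᵥ u)⁻¹ • vecMulVec u r
  val_inv := by
    have h0 : vecMulVec u r * vecMulVec u r = (r ⬝ᵥ u) • vecMulVec u r := vmv_mul_vmv u r u r
    simp only [mul_sub, sub_mul, add_mul, mul_add, smul_add, one_mul, mul_one, mul_smul_comm,
      smul_mul_assoc, h0, smul_smul]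
    have : vecMulVec u r - ((1 + r ⬝ᵥ u)⁻¹ • vecMulVec u r +
        ((1 + r ⬝ᵥ u)⁻¹ * (r ⬝ᵥ u)) • vecMulVec u r) = 0 := by
      rw [← add_smul]
      have e : (1 + r ⬝ᵥ u)⁻¹ + (1 + r ⬝ᵥ u)⁻¹ * (r ⬝ᵥ u) = 1 := by field_simp
      rw [e, one_smul, sub_self]
    calc 1 + vecMulVec u r - ((1 + r ⬝ᵥ u)⁻¹ • vecMulVec u r +
          ((1 + r ⬝ᵥ u)⁻¹ * (r ⬝ᵥ u)) • vecMulVec u r)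
        = 1 + (vecMulVec u r - ((1 + r ⬝ᵥ u)⁻¹ • vecMulVec u r +
          ((1 + r ⬝ᵥ u)⁻¹ * (r ⬝ᵥ u)) • vecMulVec u r)) := by abel
      _ = 1 := by rw [this, add_zero]
  inv_val := by
    have h0 : vecMulVec u r * vecMulVec u r = (r ⬝ᵥ u) • vecMulVec u r := vmv_mul_vmv u r u r
    simp only [mul_sub, sub_mul, add_mul, mul_add, smul_add, one_mul, mul_one, mul_smul_comm,
      smul_mul_assoc, h0, smul_smul]
    have : vecMulVec u r - ((1 + r ⬝ᵥ u)⁻¹ • vecMulVec u r +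
        ((1 + r ⬝ᵥ u)⁻¹ * (r ⬝ᵥ u)) • vecMulVec u r) = 0 := by
      rw [← add_smul]
      have e : (1 + r ⬝ᵥ u)⁻¹ + (1 + r ⬝ᵥ u)⁻¹ * (r ⬝ᵥ u) = 1 := by field_simp
      rw [e, one_smul, sub_self]
    calc 1 - (1 + r ⬝ᵥ u)⁻¹ • vecMulVec u r + (vecMulVec u r -
          ((1 + r ⬝ᵥ u)⁻¹ * (r ⬝ᵥ u)) • vecMulVec u r)
        = 1 + (vecMulVec u r - ((1 + r ⬝ᵥ u)⁻¹ • vecMulVec u r +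
          ((1 + r ⬝ᵥ u)⁻¹ * (r ⬝ᵥ u)) • vecMulVec u r)) := by abel
      _ = 1 := by rw [this, add_zero]

@[simp] lemma rkU_val (u r : ι → k) (h) : (rkU u r h : Matrix ι ι k) = 1 + vecMulVec u r := rfl

lemma rkU_mulVec (u r : ι → k) (h) (x : ι → k) :
    (rkU u r h : Matrix ι ι k) *ᵥ x = x + (r ⬝ᵥ x) • u := by
  rw [rkU_val, add_mulVec, one_mulVec, vmv_mulVec]

lemma tvU_mulVec (u r : ι → k) (h) (x : ι → k) :
    (tvU u r h : Matrix ι ι k) *ᵥ x = x + (r ⬝ᵥ x) • u := by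
  rw [tvU_val, add_mulVec, one_mulVec, vmv_mulVec]

end Stmt19

namespace Stmt19
open Matrix
variable {k : Type*} [Field k] {ι : Type*} [Fintype ι] [DecidableEq ι]

/-- scalar unit -/
def scU (c : k) (h : c ≠ 0) : (Matrix ι ι k)ˣ where
  val := c • 1
  inv := c⁻¹ • 1
  val_inv := by rw [smul_mul_smul_comm, mul_inv_cancel₀ h, one_mul, one_smul]
  inv_val := by rw [smul_mul_smul_comm, inv_mul_cancel₀ h, one_mul, one_smul]

@[simp] lemma scU_val (c : k) (h) : ((scU c h : (Matrix ι ι k)ˣ) : Matrix ι ι k) = c • 1 := rfl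

lemma scU_mem_center (c : k) (h : c ≠ 0) :
    (scU c h : (Matrix ι ι k)ˣ) ∈ Subgroup.center ((Matrix ι ι k)ˣ) := by
  rw [Subgroup.mem_center_iff]
  intro g
  ext1
  simp only [Units.val_mul, scU_val]
  rw [mul_smul_comm, smul_mul_assoc, mul_one, one_mul]

/-- transvection unit -/
def tvuIJ (i j : ι) (c : k) (hij : i ≠ j) : (Matrix ι ι k)ˣ where
  val := transvection i j c
  inv := transvection i j (-c)
  val_inv := by rw [transvection_mul_transvection_same _ _ hij, add_neg_cancel, transvection_zero]
  inv_val := by rw [transvection_mul_transvection_same _ _ hij, neg_add_cancel, transvection_zero]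

@[simp] lemma tvuIJ_val (i j : ι) (c : k) (hij) :
    ((tvuIJ i j c hij : (Matrix ι ι k)ˣ) : Matrix ι ι k) = transvection i j c := rfl

lemma single_dot_single (i j : ι) (c : k) (hij : i ≠ j) :
    Pi.single j c ⬝ᵥ (Pi.single i 1 : ι → k) = 0 := by
  simp [dotProduct, Pi.single_apply, hij]

lemma stdBasisMatrix_eq_vmv (i j : ι) (c : k) :
    single i j c = vecMulVec (Pi.single i 1) (Pi.single j c) := by
  ext x y
  rw [vecMulVec_apply, Matrix.single]
  by_cases hx : i = x <;> by_cases hy : j = y <;>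
    simp [Pi.single_apply, hx, hy] <;> simp [eq_comm, hx, hy] <;> tauto

lemma transvection_eq_tvU (i j : ι) (c : k) (hij : i ≠ j) :
    tvuIJ i j c hij = tvU (Pi.single i 1) (Pi.single j c) (single_dot_single i j c hij) := by
  ext1
  simp only [tvuIJ_val, tvU_val, transvection, stdBasisMatrix_eq_vmv]

/-- prescribe values of a dot-product functional on a linearly independent set -/
lemma exists_dual_vec (s : Set (ι → k)) (hs : LinearIndependent k ((↑) : s → (ι → k)))
    (cf : (ι → k) → k) : ∃ r : ι → k, ∀ x ∈ s, r ⬝ᵥ x = cf x := by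
  classical
  let b := Module.Basis.extend hs
  let ψ : (ι → k) →ₗ[k] k := b.constr k (fun x => cf (x : ι → k))
  refine ⟨fun l => ψ (Pi.single l 1), fun x hx => ?_⟩
  have hxe : x ∈ LinearIndepOn.extend (v := id) hs (Set.subset_univ s) := LinearIndepOn.subset_extend (v := id) hs _ hx
  have hb : ψ x = cf x := by
    have : x = b ⟨x, hxe⟩ := (Module.Basis.extend_apply_self hs ⟨x, hxe⟩).symm
    conv_lhs => rw [this]
    rw [Module.Basis.constr_basis]
  have hsingle : ∀ l : ι, (fun j => if l = j then (1:k) else 0) = Pi.single l 1 := by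
    intro l; ext j; simp [Pi.single_apply, eq_comm]
  rw [← hb, LinearMap.pi_apply_eq_sum_univ ψ x, dotProduct]
  apply Finset.sum_congr rfl
  intro l _
  rw [hsingle l, smul_eq_mul, mul_comm]

/-- a matrix fixing every line is scalar -/
lemma scalar_of_fixes_lines [Nonempty ι] {M : Matrix ι ι k}
    (hM : ∀ v : ι → k, ∃ c : k, M *ᵥ v = c • v) : ∃ c : k, M = c • (1 : Matrix ι ι k) := by
  classical
  have hc : ∀ i : ι, ∃ c : k, M *ᵥ (Pi.single i 1 : ι → k) = c • (Pi.single i 1 : ι → k) := fun i => hM _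
  choose c hcspec using hc
  obtain ⟨i₀⟩ := ‹Nonempty ι›
  have key : ∀ i : ι, c i = c i₀ := by
    intro i
    by_cases hi : i = i₀
    · rw [hi]
    · obtain ⟨d, hd⟩ := hM (Pi.single i 1 + Pi.single i₀ 1)
      rw [mulVec_add, hcspec i, hcspec i₀, smul_add] at hd
      have h1 := congrFun hd i
      have h2 := congrFun hd i₀
      simp [Pi.single_apply, hi, Ne.symm hi] at h1 h2
      rw [h1, h2]
  refine ⟨c i₀, ?_⟩
  ext x y
  have h := hcspec y
  rw [mulVec_single_one] at h
  have hx := congrFun h x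
  simp only [col_apply] at hx
  rw [hx, key y]
  by_cases hxy : x = y <;>
    simp [Pi.single_apply, Matrix.one_apply, hxy, Matrix.smul_apply]

end Stmt19

namespace Stmt19
open Matrix
variable {k : Type*} [Field k] {ι : Type*} [Fintype ι] [DecidableEq ι]

lemma tv_mul_tv (p q : ι) (hpq : p ≠ q) (x y : k) :
    transvection p q x * transvection q p y =
      1 + (single p q x + single q p y + single p p (x * y)) := by
  simp only [transvection, add_mul, mul_add, one_mul, mul_one, single_mul_single_same]
  abel

lemma four_tv (i j : ι) (hij : i ≠ j) (b : k) (hb : b ≠ 0) :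
    transvection i j (b - 1) * transvection j i 1 * transvection i j (b⁻¹ - 1) *
      transvection j i (-b)
    = diagonal (fun l => if l = i then b else if l = j then b⁻¹ else 1) := by
  have hz1 : ∀ (a b' : ι) (c d : k),
      single a j c * single i b' d = 0 := fun a b' c d =>
    single_mul_single_of_ne (c := c) a j i hij.symm d
  have hz2 : ∀ (a b' : ι) (c d : k),
      single a i c * single j b' d = 0 := fun a b' c d =>
    single_mul_single_of_ne (c := c) a i j hij d
  rw [mul_assoc (transvection i j (b-1) * transvection j i 1), tv_mul_tv i j hij,
    tv_mul_tv i j hij]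
  simp only [add_mul, mul_add, one_mul, mul_one, single_mul_single_same, hz1, hz2,
    add_zero, zero_add]
  ext x y
  simp only [Matrix.add_apply, Matrix.one_apply, Matrix.diagonal_apply, Matrix.single,
    Matrix.of_apply]
  simp only [@eq_comm ι i x, @eq_comm ι j x, @eq_comm ι i y, @eq_comm ι j y]
  by_cases hx : x = i <;> by_cases hy : y = j <;> by_cases hx' : x = j <;>
    by_cases hy' : y = i <;> by_cases hxy : x = y <;>
    simp_all <;> (try field_simp) <;> ring_nf

end Stmt19

namespace Stmt19
open Matrix
variable {k : Type*} [Field k] {ι : Type*} [Fintype ι] [DecidableEq ι]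

/-- set of transvection units -/
def Tset (k : Type*) [Field k] (ι : Type*) [Fintype ι] [DecidableEq ι] :
    Set ((Matrix ι ι k)ˣ) :=
  {g | ∃ i j : ι, ∃ c : k, i ≠ j ∧ (g : Matrix ι ι k) = transvection i j c}

/-- subgroup generated by transvections -/
def Tsub (k : Type*) [Field k] (ι : Type*) [Fintype ι] [DecidableEq ι] :
    Subgroup ((Matrix ι ι k)ˣ) :=
  Subgroup.closure (Tset k ι)

lemma tvuIJ_mem_Tsub (i j : ι) (c : k) (hij : i ≠ j) : tvuIJ i j c hij ∈ Tsub k ι :=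
  Subgroup.subset_closure ⟨i, j, c, hij, rfl⟩

/-- diagonal unit -/
def diagU (d : ι → k) (h : ∀ l, d l ≠ 0) : (Matrix ι ι k)ˣ where
  val := diagonal d
  inv := diagonal (fun l => (d l)⁻¹)
  val_inv := by
    rw [diagonal_mul_diagonal]
    convert diagonal_one using 2
    ext l; exact mul_inv_cancel₀ (h l)
  inv_val := by
    rw [diagonal_mul_diagonal]
    convert diagonal_one using 2
    ext l; exact inv_mul_cancel₀ (h l)

@[simp] lemma diagU_val (d : ι → k) (h) : ((diagU d h : (Matrix ι ι k)ˣ) : Matrix ι ι k) = diagonal d := rfl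

/-- the special diagonal matrix with b at i, b⁻¹ at j, is in Tsub -/
lemma special_diag_mem_Tsub (i j : ι) (hij : i ≠ j) (b : k) (hb : b ≠ 0)
    (h : ∀ l, (if l = i then b else if l = j then b⁻¹ else (1:k)) ≠ 0) :
    diagU (fun l => if l = i then b else if l = j then b⁻¹ else 1) h ∈ Tsub k ι := by
  have key : diagU (fun l => if l = i then b else if l = j then b⁻¹ else 1) h =
      tvuIJ i j (b - 1) hij * tvuIJ j i 1 hij.symm * tvuIJ i j (b⁻¹ - 1) hij *
        tvuIJ j i (-b) hij.symm := by
    ext1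
    simp only [Units.val_mul, tvuIJ_val, diagU_val]
    rw [← four_tv i j hij b hb]
  rw [key]
  exact mul_mem (mul_mem (mul_mem (tvuIJ_mem_Tsub _ _ _ _) (tvuIJ_mem_Tsub _ _ _ _))
    (tvuIJ_mem_Tsub _ _ _ _)) (tvuIJ_mem_Tsub _ _ _ _)

/-- any diagonal matrix with determinant one is a product of transvections -/
lemma diag_det_one_mem_Tsub {m : ℕ} (d : Fin m → k) (h0 : ∀ l, d l ≠ 0)
    (h1 : ∏ l, d l = 1) : diagU d h0 ∈ Tsub k (Fin m) := by
  classical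
  suffices aux : ∀ (t : ℕ) (d : Fin m → k) (h0 : ∀ l, d l ≠ 0), (∏ l, d l = 1) →
      (∀ l : Fin m, t ≤ l.val → d l = 1) → diagU d h0 ∈ Tsub k (Fin m) by
    exact aux m d h0 h1 (fun l hl => absurd l.isLt (by omega))
  intro t
  induction t with
  | zero =>
    intro d h0 hprod hlast
    have hd : d = fun _ => 1 := funext fun l => hlast l (Nat.zero_le _)
    have : diagU d h0 = 1 := by
      ext1; simp [diagU_val, hd, diagonal_one]
    rw [this]; exact one_mem _
  | succ t ih =>
    intro d h0 hprod hlast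
    by_cases ht : t = 0
    · subst ht
      apply ih d h0 hprod
      intro l _
      by_cases hl : 1 ≤ l.val
      · exact hlast l hl
      · -- l.val = 0 : use the product
        have hothers : ∀ x ∈ Finset.univ.erase l, d x = 1 := by
          intro x hx
          rcases Finset.mem_erase.1 hx with ⟨hxl, -⟩
          apply hlast
          -- x ≠ l and l.val = 0 so x.val ≥ 1
          rcases Nat.eq_zero_or_pos x.val with h | h
          · exfalso; apply hxl; apply Fin.ext; omega
          · omega
        have := Finset.mul_prod_erase Finset.univ d (Finset.mem_univ l)
        rw [Finset.prod_congr rfl hothers] at this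
        simp only [Finset.prod_const_one, mul_one] at this
        rw [this]; exact hprod
    · -- 1 ≤ t
      by_cases htm : m ≤ t
      · apply ih d h0 hprod
        intro l hl
        exact absurd l.isLt (by omega)
      · -- t < m, t ≥ 1
        have htm' : t < m := by omega
        have ht1 : 1 ≤ t := by omega
        set it : Fin m := ⟨t, htm'⟩ with hit
        set jt : Fin m := ⟨t - 1, by omega⟩ with hjt
        have hij : jt ≠ it := by
          intro hcon
          have := congrArg Fin.val hcon
          simp [hit, hjt] at this
          omega
        set a : k := d it with ha
        have ha0 : a ≠ 0 := h0 it
        set d'' : Fin m → k := Function.update (Function.update d jt (d jt * a)) it 1 with hd''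
        have h0'' : ∀ l, d'' l ≠ 0 := by
          intro l
          rw [hd'']
          by_cases h1l : l = it
          · rw [h1l, Function.update_self]; exact one_ne_zero
          · by_cases h2l : l = jt
            · rw [Function.update_of_ne h1l, h2l, Function.update_self]
              exact mul_ne_zero (h0 jt) ha0
            · rw [Function.update_of_ne h1l, Function.update_of_ne h2l]
              exact h0 l
        have hprod'' : ∏ l, d'' l = 1 := by
          rw [hd'', Finset.prod_update_of_mem (Finset.mem_univ it), one_mul,
            Finset.sdiff_singleton_eq_erase,
            Finset.prod_update_of_mem (Finset.mem_erase.2 ⟨hij, Finset.mem_univ jt⟩),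
            Finset.sdiff_singleton_eq_erase]
          calc (d jt * a) * ∏ x ∈ (Finset.univ.erase it).erase jt, d x
              = a * (d jt * ∏ x ∈ (Finset.univ.erase it).erase jt, d x) := by ring
            _ = a * ∏ x ∈ Finset.univ.erase it, d x := by
                rw [Finset.mul_prod_erase (Finset.univ.erase it) d
                  (Finset.mem_erase.2 ⟨hij, Finset.mem_univ jt⟩)]
            _ = d it * ∏ x ∈ Finset.univ.erase it, d x := by rw [ha]
            _ = ∏ l, d l := Finset.mul_prod_erase Finset.univ d (Finset.mem_univ it)
            _ = 1 := hprod
        have hlast'' : ∀ l : Fin m, t ≤ l.val → d'' l = 1 := by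
          intro l hl
          rw [hd'']
          by_cases h1l : l = it
          · rw [h1l, Function.update_self]
          · have hlv : t + 1 ≤ l.val := by
              rcases Nat.lt_or_ge l.val (t+1) with h | h
              · exfalso; apply h1l; apply Fin.ext; simp [hit]; omega
              · exact h
            have h2l : l ≠ jt := by
              intro hcon
              have := congrArg Fin.val hcon
              simp [hjt] at this
              omega
            rw [Function.update_of_ne h1l, Function.update_of_ne h2l]
            exact hlast l hlv
        have hmem'' := ih d'' h0'' hprod'' hlast''
        -- special diagonal
        have hsd : ∀ l, (if l = jt then a⁻¹ else if l = it then (a⁻¹)⁻¹ else (1:k)) ≠ 0 := by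
          intro l
          by_cases h1l : l = jt
          · simp [h1l, inv_ne_zero ha0]
          · by_cases h2l : l = it
            · simp only [h1l, h2l, if_neg (Ne.symm hij), if_pos rfl, inv_inv]
              exact ha0
            · simp [h1l, h2l]
        have hspecial := special_diag_mem_Tsub jt it hij a⁻¹ (inv_ne_zero ha0) hsd
        have hdecomp : diagU d h0 = diagU d'' h0'' *
            diagU (fun l => if l = jt then a⁻¹ else if l = it then (a⁻¹)⁻¹ else 1) hsd := by
          ext1
          simp only [Units.val_mul, diagU_val, diagonal_mul_diagonal]
          refine congrArg diagonal (funext fun l => ?_)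
          rw [hd'']
          by_cases h1l : l = it
          · rw [h1l, Function.update_self, if_neg (Ne.symm hij), if_pos rfl, inv_inv, one_mul]
          · by_cases h2l : l = jt
            · rw [h2l, Function.update_of_ne hij, Function.update_self, if_pos rfl]
              field_simp
            · rw [Function.update_of_ne h1l, Function.update_of_ne h2l, if_neg h2l, if_neg h1l,
                mul_one]
        rw [hdecomp]
        exact mul_mem hmem'' hspecial

end Stmt19

namespace Stmt19
open Matrix
variable {k : Type*} [Field k] {ι : Type*} [Fintype ι] [DecidableEq ι]

lemma unit_inv_mulVec (g : (Matrix ι ι k)ˣ) (x : ι → k) :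
    ((g⁻¹ : (Matrix ι ι k)ˣ) : Matrix ι ι k) *ᵥ ((g : Matrix ι ι k) *ᵥ x) = x := by
  rw [mulVec_mulVec, Units.inv_mul, one_mulVec]

lemma unit_mulVec_inv (g : (Matrix ι ι k)ˣ) (x : ι → k) :
    (g : Matrix ι ι k) *ᵥ (((g⁻¹ : (Matrix ι ι k)ˣ) : Matrix ι ι k) *ᵥ x) = x := by
  rw [mulVec_mulVec, Units.mul_inv, one_mulVec]

lemma tvU_zero (u : ι → k) (h : (0 : ι → k) ⬝ᵥ u = 0) : tvU u 0 h = 1 := by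
  ext1
  simp only [tvU_val, Units.val_one]
  have : vecMulVec u (0 : ι → k) = 0 := by ext x y; simp [vecMulVec_apply]
  rw [this, add_zero]

lemma tvU_inv (u r : ι → k) (h : r ⬝ᵥ u = 0) :
    (tvU u r h)⁻¹ = tvU u (-r) (by simp [neg_dotProduct, h]) := by
  ext1
  show (1 - vecMulVec u r : Matrix ι ι k) = _
  simp only [tvU_val]
  have : vecMulVec u (-r) = - vecMulVec u r := by ext x y; simp [vecMulVec_apply]
  rw [this]; abel

/-- GL is transitive on nonzero vectors -/
lemma exists_unit_mulVec_eq {v u : ι → k} (hv : v ≠ 0) (hu : u ≠ 0) :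
    ∃ g : (Matrix ι ι k)ˣ, (g : Matrix ι ι k) *ᵥ v = u := by
  by_cases hspan : ∃ c : k, c • v = u
  · obtain ⟨c, hc⟩ := hspan
    have hc0 : c ≠ 0 := by rintro rfl; simp at hc; exact hu hc.symm
    refine ⟨scU c hc0, ?_⟩
    rw [scU_val, smul_mulVec, one_mulVec, hc]
  · have husp : u ∉ Submodule.span k {v} := by
      rw [Submodule.mem_span_singleton]; exact hspan
    have huv : u ∉ ({v} : Set (ι → k)) := by
      intro hmem
      rw [Set.mem_singleton_iff] at hmem
      subst hmem; exact husp (Submodule.mem_span_singleton_self u)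
    have hind : LinearIndependent k ((↑) : (insert u {v} : Set (ι → k)) → (ι → k)) :=
      (linearIndepOn_id_insert huv).2 ⟨(linearIndepOn_singleton_iff k).2 hv, husp⟩
    obtain ⟨r, hr⟩ := exists_dual_vec (insert u {v}) hind (fun _ => 1)
    have hrv : r ⬝ᵥ v = 1 := hr v (Set.mem_insert_of_mem _ rfl)
    have hru : r ⬝ᵥ u = 1 := hr u (Set.mem_insert _ _)
    have hδ : 1 + r ⬝ᵥ (u - v) ≠ 0 := by
      rw [dotProduct_sub, hru, hrv]; simp
    refine ⟨rkU (u - v) r hδ, ?_⟩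
    rw [rkU_mulVec, hrv, one_smul]; abel

end Stmt19

namespace Stmt19
open Matrix
variable {k : Type*} [Field k] [IsAlgClosed k]

lemma diag_mul_std_mul_diag {ι : Type*} [Fintype ι] [DecidableEq ι] (f g : ι → k) (i j : ι)
    (c : k) :
    diagonal f * single i j c * diagonal g = single i j (f i * c * g j) := by
  ext x y
  rw [mul_diagonal, diagonal_mul]
  by_cases hx : i = x <;> by_cases hy : j = y <;>
    simp [Matrix.single, Matrix.of_apply, hx, hy] <;> ring

lemma diag_conj_tv {ι : Type*} [Fintype ι] [DecidableEq ι] (f g : ι → k) (i j : ι)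
    (c : k) :
    diagonal f * transvection i j c * diagonal g =
      diagonal (fun l => f l * g l) + single i j (f i * c * g j) := by
  simp only [transvection, mul_add, add_mul, mul_one, diagonal_mul_diagonal,
    diag_mul_std_mul_diag]

open scoped commutatorElement in
theorem key {m : ℕ} (hm : 0 < m) (N : Subgroup (Matrix (Fin m) (Fin m) k)ˣ) (hN : N.Normal)
    (hZ : Subgroup.center ((Matrix (Fin m) (Fin m) k)ˣ) ≤ N)
    (hNZ : ¬ N ≤ Subgroup.center ((Matrix (Fin m) (Fin m) k)ˣ)) :
    ∀ g : (Matrix (Fin m) (Fin m) k)ˣ, g ∈ N := by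
  classical
  obtain ⟨A, hAN, hA⟩ := SetLike.not_le_iff_exists.1 hNZ
  -- A is not scalar: get v with A v not a multiple of v
  have hAv : ∃ v : Fin m → k, ¬ ∃ c : k, (A : Matrix (Fin m) (Fin m) k) *ᵥ v = c • v := by
    by_contra hcon
    push_neg at hcon
    have : Nonempty (Fin m) := ⟨⟨0, hm⟩⟩
    obtain ⟨c, hc⟩ := scalar_of_fixes_lines (fun v => hcon v)
    apply hA
    rw [Subgroup.mem_center_iff]
    intro g
    ext1
    simp only [Units.val_mul, hc]
    rw [mul_smul_comm, smul_mul_assoc, mul_one, one_mul]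
  obtain ⟨v, hv⟩ := hAv
  have hv0 : v ≠ 0 := by
    rintro rfl
    exact hv ⟨0, by simp⟩
  set w : Fin m → k := (A : Matrix (Fin m) (Fin m) k) *ᵥ v with hw
  have hwsp : w ∉ Submodule.span k {v} := by
    rw [Submodule.mem_span_singleton]
    rintro ⟨c, hc⟩
    exact hv ⟨c, hc.symm⟩
  have hwv : w ∉ ({v} : Set (Fin m → k)) := by
    intro hmem
    rw [Set.mem_singleton_iff] at hmem
    exact hwsp (by rw [hmem]; exact Submodule.mem_span_singleton_self v)
  have hindvw : LinearIndependent k ((↑) : (insert w {v} : Set (Fin m → k)) → (Fin m → k)) :=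
    (linearIndepOn_id_insert hwv).2 ⟨(linearIndepOn_singleton_iff k).2 hv0, hwsp⟩
  -- transitivity of N on lines
  have T' : ∀ u : Fin m → k, u ≠ 0 → ∃ n ∈ N, ∃ c : k, c ≠ 0 ∧
      ((n : (Matrix (Fin m) (Fin m) k)ˣ) : Matrix (Fin m) (Fin m) k) *ᵥ v = c • u := by
    intro u hu
    by_cases hsp : ∃ c : k, c • v = u
    · obtain ⟨c, hc⟩ := hsp
      have hc0 : c ≠ 0 := by rintro rfl; simp at hc; exact hu hc.symm
      refine ⟨1, one_mem _, c⁻¹, inv_ne_zero hc0, ?_⟩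
      rw [Units.val_one, one_mulVec, ← hc, smul_smul, inv_mul_cancel₀ hc0, one_smul]
    · -- u independent from v; find functional r with r v = 0, r w = 1, r u ≠ 0
      have husp : u ∉ Submodule.span k {v} := by
        rw [Submodule.mem_span_singleton]; exact hsp
      have hr : ∃ r : Fin m → k, r ⬝ᵥ v = 0 ∧ r ⬝ᵥ w = 1 ∧ r ⬝ᵥ u ≠ 0 := by
        by_cases huw : u ∈ Submodule.span k {v, w}
        · obtain ⟨α, β, hαβ⟩ := Submodule.mem_span_pair.1 huw
          have hβ : β ≠ 0 := by
            rintro rfl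
            exact hsp ⟨α, by simpa using hαβ⟩
          obtain ⟨r, hrs⟩ := exists_dual_vec (insert w {v}) hindvw
            (fun x => if x = v then 0 else 1)
          have hrv : r ⬝ᵥ v = 0 := by
            have := hrs v (Set.mem_insert_of_mem _ rfl)
            simpa using this
          have hwne : w ≠ v := by
            intro hcon
            exact hwsp (by rw [hcon]; exact Submodule.mem_span_singleton_self v)
          have hrw : r ⬝ᵥ w = 1 := by
            have := hrs w (Set.mem_insert _ _)
            simpa [hwne] using this
          refine ⟨r, hrv, hrw, ?_⟩
          rw [← hαβ, dotProduct_add, dotProduct_smul, dotProduct_smul, hrv, hrw]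
          simpa using hβ
        · -- triple independent
          have hus : u ∉ (insert w {v} : Set (Fin m → k)) := by
            intro hmem
            rcases Set.mem_insert_iff.1 hmem with h | h
            · exact huw (h ▸ Submodule.subset_span (by simp))
            · rw [Set.mem_singleton_iff] at h
              exact huw (h ▸ Submodule.subset_span (by simp))
          have husp2 : u ∉ Submodule.span k (insert w {v} : Set (Fin m → k)) := by
            intro hmem
            apply huw
            have : (insert w {v} : Set (Fin m → k)) ⊆ ({v, w} : Set (Fin m → k)) := by
              intro x hx
              rcases Set.mem_insert_iff.1 hx with h | h
              · right; exact h
              · left; exact h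
            exact Submodule.span_mono this hmem
          have hind3 : LinearIndependent k
              ((↑) : (insert u (insert w {v}) : Set (Fin m → k)) → (Fin m → k)) :=
            (linearIndepOn_id_insert hus).2 ⟨hindvw, husp2⟩
          obtain ⟨r, hrs⟩ := exists_dual_vec (insert u (insert w {v})) hind3
            (fun x => if x = v then 0 else 1)
          have hune : u ≠ v := by
            intro hcon
            exact husp (by rw [hcon]; exact Submodule.mem_span_singleton_self v)
          have hwne : w ≠ v := by
            intro hcon
            exact hwsp (by rw [hcon]; exact Submodule.mem_span_singleton_self v)
          refine ⟨r, ?_, ?_, ?_⟩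
          · simpa using hrs v (Set.mem_insert_of_mem _ (Set.mem_insert_of_mem _ rfl))
          · simpa [hwne] using hrs w (Set.mem_insert_of_mem _ (Set.mem_insert _ _))
          · have := hrs u (Set.mem_insert _ _)
            simp [hune] at this
            rw [this]; exact one_ne_zero
      obtain ⟨r, hrv, hrw, hru⟩ := hr
      have hδ : 1 + r ⬝ᵥ (u - w) ≠ 0 := by
        rw [dotProduct_sub, hrw]
        simpa using hru
      set g := rkU (u - w) r hδ with hg
      have hgv : (g : Matrix (Fin m) (Fin m) k) *ᵥ v = v := by
        rw [hg, rkU_mulVec, hrv, zero_smul, add_zero]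
      have hginvv : ((g⁻¹ : (Matrix (Fin m) (Fin m) k)ˣ) : Matrix (Fin m) (Fin m) k) *ᵥ v = v := by
        conv_lhs => rw [← hgv]
        exact unit_inv_mulVec g v
      refine ⟨g * A * g⁻¹, hN.conj_mem A hAN g, 1, one_ne_zero, ?_⟩
      rw [Units.val_mul, Units.val_mul, ← mulVec_mulVec, ← mulVec_mulVec, hginvv, ← hw,
        rkU_mulVec, hrw, one_smul, one_smul]
      abel
  -- decomposition predicate
  let Dec : (Matrix (Fin m) (Fin m) k)ˣ → Prop := fun g =>
    ∃ n ∈ N, ∃ r : Fin m → k, ∃ hr : r ⬝ᵥ v = 0, g = n * tvU v r hr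
  have dec_one : Dec 1 := by
    refine ⟨1, one_mem _, 0, by simp, ?_⟩
    rw [tvU_zero, mul_one]
  have dec_mul : ∀ g h, Dec g → Dec h → Dec (g * h) := by
    rintro g h ⟨n₁, hn₁, r₁, hr₁, rfl⟩ ⟨n₂, hn₂, r₂, hr₂, rfl⟩
    refine ⟨n₁ * (tvU v r₁ hr₁ * n₂ * (tvU v r₁ hr₁)⁻¹),
      mul_mem hn₁ (hN.conj_mem n₂ hn₂ _), r₁ + r₂, by simp [add_dotProduct, hr₁, hr₂], ?_⟩
    have := tvU_mul v r₁ r₂ hr₁ hr₂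
    rw [show tvU v (r₁ + r₂) (by simp [add_dotProduct, hr₁, hr₂]) = tvU v r₁ hr₁ * tvU v r₂ hr₂
      from by rw [this]]
    group
  have dec_inv : ∀ g, Dec g → Dec g⁻¹ := by
    rintro g ⟨n, hn, r, hr, rfl⟩
    refine ⟨(tvU v r hr)⁻¹ * n⁻¹ * tvU v r hr, ?_, -r, by simp [neg_dotProduct, hr], ?_⟩
    · have := hN.conj_mem n⁻¹ (inv_mem hn) (tvU v r hr)⁻¹
      simpa using this
    · have := tvU_inv v r hr
      rw [show tvU v (-r) (by simp [neg_dotProduct, hr]) = (tvU v r hr)⁻¹ from by rw [this]]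
      group
  have dec_tv : ∀ (i j : Fin m) (c : k) (hij : i ≠ j), Dec (tvuIJ i j c hij) := by
    intro i j c hij
    have hei : (Pi.single i 1 : Fin m → k) ≠ 0 := by
      intro hcon; have := congrFun hcon i; simp at this
    obtain ⟨gc, hgc⟩ := exists_unit_mulVec_eq hv0 hei
    set r' : Fin m → k := Pi.single j c ᵥ* (gc : Matrix (Fin m) (Fin m) k) with hr'def
    have hr'v : r' ⬝ᵥ v = 0 := by
      rw [hr'def, ← dotProduct_mulVec, hgc]
      exact single_dot_single i j c hij
    have hconj : tvuIJ i j c hij = gc * tvU v r' hr'v * gc⁻¹ := by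
      apply Units.ext
      rw [tvU_conj gc v r' hr'v]
      have h1 : r' ᵥ* ((gc⁻¹ : (Matrix (Fin m) (Fin m) k)ˣ) : Matrix (Fin m) (Fin m) k)
          = Pi.single j c := by
        rw [hr'def, Matrix.vecMul_vecMul, Units.mul_inv, Matrix.vecMul_one]
      rw [tvU_val, tvuIJ_val, hgc, h1, transvection, stdBasisMatrix_eq_vmv]
    obtain ⟨n, hnN, c₀, hc₀, hnv⟩ := T' (Pi.single i 1) hei
    set p : (Matrix (Fin m) (Fin m) k)ˣ := n⁻¹ * gc with hpdef
    have hgcnp : gc = n * p := by rw [hpdef]; group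
    have hpv : ((p : (Matrix (Fin m) (Fin m) k)ˣ) : Matrix (Fin m) (Fin m) k) *ᵥ v
        = c₀⁻¹ • v := by
      rw [hpdef, Units.val_mul, ← mulVec_mulVec, hgc,
        show (Pi.single i 1 : Fin m → k)
            = c₀⁻¹ • (((n : (Matrix (Fin m) (Fin m) k)ˣ) : Matrix (Fin m) (Fin m) k) *ᵥ v) from by
          rw [hnv, smul_smul, inv_mul_cancel₀ hc₀, one_smul],
        mulVec_smul, unit_inv_mulVec]
    have hpinv : ((p⁻¹ : (Matrix (Fin m) (Fin m) k)ˣ) : Matrix (Fin m) (Fin m) k) *ᵥ v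
        = c₀ • v := by
      have h2 := congrArg
        (fun x => ((p⁻¹ : (Matrix (Fin m) (Fin m) k)ˣ) : Matrix (Fin m) (Fin m) k) *ᵥ x) hpv
      simp only [unit_inv_mulVec, mulVec_smul] at h2
      conv_rhs => rw [h2]
      rw [smul_smul, mul_inv_cancel₀ hc₀, one_smul]
    set r'' : Fin m → k :=
      c₀⁻¹ • (r' ᵥ* ((p⁻¹ : (Matrix (Fin m) (Fin m) k)ˣ) : Matrix (Fin m) (Fin m) k))
      with hr''def
    have hr''v : r'' ⬝ᵥ v = 0 := by
      rw [hr''def, smul_dotProduct, ← dotProduct_mulVec, hpinv, dotProduct_smul, hr'v]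
      simp
    have hpup : p * tvU v r' hr'v * p⁻¹ = tvU v r'' hr''v := by
      apply Units.ext
      rw [tvU_conj p v r' hr'v, tvU_val, tvU_val, hpv, vmv_smul_left, hr''def]
    refine ⟨n * (tvU v r'' hr''v * n⁻¹ * (tvU v r'' hr''v)⁻¹),
      mul_mem hnN (hN.conj_mem _ (inv_mem hnN) _), r'', hr''v, ?_⟩
    rw [hconj, hgcnp,
      show (n * p) * tvU v r' hr'v * (n * p)⁻¹ = n * (p * tvU v r' hr'v * p⁻¹) * n⁻¹ from by
        group,
      hpup]
    group
  have dec_Tsub : ∀ g ∈ Tsub k (Fin m), Dec g := by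
    intro g hg
    refine Subgroup.closure_induction ?_ dec_one (fun x y _ _ => dec_mul x y)
      (fun x _ => dec_inv x) hg
    rintro x ⟨i, j, c, hij, hx⟩
    have : x = tvuIJ i j c hij := Units.ext hx
    rw [this]; exact dec_tv i j c hij
  have dec_scalar : ∀ (c : k) (hc : c ≠ 0), Dec (scU c hc) := by
    intro c hc
    refine ⟨scU c hc, hZ (scU_mem_center c hc), 0, by simp, ?_⟩
    rw [tvU_zero, mul_one]
  -- decomposition of diagonal units into scalar * (det-one diagonal)
  have diag_decomp : ∀ d : Fin m → k, (diagonal d).det ≠ 0 →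
      ∀ h : (Matrix (Fin m) (Fin m) k)ˣ, (h : Matrix (Fin m) (Fin m) k) = diagonal d →
      ∃ (c : k) (hc0 : c ≠ 0) (d' : Fin m → k) (hd'0 : ∀ l, d' l ≠ 0),
        (∏ l, d' l = 1) ∧ h = scU c hc0 * diagU d' hd'0 := by
    intro d hddet h hval
    rw [det_diagonal] at hddet
    have hd0 : ∀ l, d l ≠ 0 := fun l => Finset.prod_ne_zero_iff.1 hddet l (Finset.mem_univ l)
    obtain ⟨c, hc⟩ := IsAlgClosed.exists_pow_nat_eq (∏ l, d l) hm
    have hc0 : c ≠ 0 := by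
      rintro rfl
      rw [zero_pow hm.ne'] at hc
      exact hddet hc.symm
    refine ⟨c, hc0, fun l => c⁻¹ * d l, fun l => mul_ne_zero (inv_ne_zero hc0) (hd0 l), ?_, ?_⟩
    · rw [Finset.prod_mul_distrib, Finset.prod_const, Finset.card_univ, Fintype.card_fin,
        inv_pow, hc, inv_mul_cancel₀ hddet]
    · apply Units.ext
      rw [hval, Units.val_mul, scU_val, diagU_val, smul_mul_assoc, one_mul]
      ext x y
      rw [Matrix.smul_apply]
      by_cases hxy : x = y
      · subst hxy; simp [diagonal_apply, smul_eq_mul, ← mul_assoc, mul_inv_cancel₀ hc0]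
      · simp [diagonal_apply, hxy]
  -- every unit decomposes
  have dec_all : ∀ g : (Matrix (Fin m) (Fin m) k)ˣ, Dec g := by
    intro g
    have hdet : (g : Matrix (Fin m) (Fin m) k).det ≠ 0 := by
      have : IsUnit (g : Matrix (Fin m) (Fin m) k).det :=
        (isUnit_iff_isUnit_det _).1 g.isUnit
      exact this.ne_zero
    refine Matrix.diagonal_transvection_induction_of_det_ne_zero
      (P := fun M => ∀ h : (Matrix (Fin m) (Fin m) k)ˣ,
        (h : Matrix (Fin m) (Fin m) k) = M → Dec h) _ hdet ?_ ?_ ?_ g rfl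
    · intro d hd h hval
      obtain ⟨c, hc0, d', hd'0, hprod', hdec⟩ := diag_decomp d hd h hval
      rw [hdec]
      exact dec_mul _ _ (dec_scalar c hc0) (dec_Tsub _ (diag_det_one_mem_Tsub d' hd'0 hprod'))
    · rintro ⟨i, j, hij, c⟩ h hval
      rw [Matrix.TransvectionStruct.toMatrix_mk] at hval
      have : h = tvuIJ i j c hij := Units.ext hval
      rw [this]; exact dec_tv i j c hij
    · intro M1 M2 h1det h2det ih1 ih2 h hval
      obtain ⟨u1, hu1⟩ := (isUnit_iff_isUnit_det M1).2 (isUnit_iff_ne_zero.2 h1det)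
      obtain ⟨u2, hu2⟩ := (isUnit_iff_isUnit_det M2).2 (isUnit_iff_ne_zero.2 h2det)
      have : h = u1 * u2 := Units.ext (by rw [hval, Units.val_mul, hu1, hu2])
      rw [this]; exact dec_mul _ _ (ih1 u1 hu1) (ih2 u2 hu2)
  -- commutators lie in N
  haveI : N.Normal := hN
  have comm_mem : ∀ g h : (Matrix (Fin m) (Fin m) k)ˣ, ⁅g, h⁆ ∈ N := by
    intro g h
    obtain ⟨n₁, hn₁, r₁, hr₁, hg⟩ := dec_all g
    obtain ⟨n₂, hn₂, r₂, hr₂, hh⟩ := dec_all h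
    rw [← QuotientGroup.eq_one_iff (N := N)]
    have h₁ : (QuotientGroup.mk' N) g = (QuotientGroup.mk' N) (tvU v r₁ hr₁) := by
      rw [hg, _root_.map_mul, show (QuotientGroup.mk' N) n₁ = 1 from (QuotientGroup.eq_one_iff n₁).2 hn₁, one_mul]
    have h₂ : (QuotientGroup.mk' N) h = (QuotientGroup.mk' N) (tvU v r₂ hr₂) := by
      rw [hh, _root_.map_mul, show (QuotientGroup.mk' N) n₂ = 1 from (QuotientGroup.eq_one_iff n₂).2 hn₂, one_mul]
    have : (QuotientGroup.mk' N) ⁅g, h⁆ = 1 := by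
      rw [map_commutatorElement, h₁, h₂, ← map_commutatorElement,
        commutatorElement_eq_one_iff_mul_comm.2 (tvU_comm v r₁ r₂ hr₁ hr₂), _root_.map_one]
    exact this
  -- every transvection lies in N
  have tv_mem : ∀ (i j : Fin m) (c : k) (hij : i ≠ j), tvuIJ i j c hij ∈ N := by
    intro i j c hij
    obtain ⟨ρ, hρ⟩ := Infinite.exists_notMem_finset ({0, 1} : Finset k)
    simp only [Finset.mem_insert, Finset.mem_singleton, not_or] at hρ
    obtain ⟨hρ0, hρ1⟩ := hρ
    set c' : k := (ρ - 1)⁻¹ * c with hc'def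
    have hρ1' : ρ - 1 ≠ 0 := sub_ne_zero.2 hρ1
    set f : Fin m → k := fun l => if l = i then ρ else 1 with hfdef
    have hf0 : ∀ l, f l ≠ 0 := by
      intro l; rw [hfdef]; dsimp only; split_ifs
      · exact hρ0
      · exact one_ne_zero
    set X : (Matrix (Fin m) (Fin m) k)ˣ := diagU f hf0 with hXdef
    set τ : (Matrix (Fin m) (Fin m) k)ˣ := tvuIJ i j c' hij with hτdef
    have hXinv : ((X⁻¹ : (Matrix (Fin m) (Fin m) k)ˣ) : Matrix (Fin m) (Fin m) k)
        = diagonal (fun l => (f l)⁻¹) := rfl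
    have hXτ : X * τ * X⁻¹ = tvuIJ i j (ρ * c') hij := by
      apply Units.ext
      rw [Units.val_mul, Units.val_mul, hXinv, hXdef, hτdef, diagU_val, tvuIJ_val, tvuIJ_val,
        diag_conj_tv]
      have h1 : (fun l => f l * (f l)⁻¹) = fun _ => (1:k) := by
        funext l; exact mul_inv_cancel₀ (hf0 l)
      have h2 : f i = ρ := by rw [hfdef]; simp
      have h3 : f j = 1 := by rw [hfdef]; dsimp only; rw [if_neg hij.symm]
      rw [h1, h2, h3, diagonal_one, transvection]
      norm_num
    have hcomm : tvuIJ i j c hij = ⁅X, τ⁆ := by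
      apply Units.ext
      show _ = ((X * τ * X⁻¹ * τ⁻¹ : (Matrix (Fin m) (Fin m) k)ˣ) : Matrix (Fin m) (Fin m) k)
      rw [Units.val_mul, hXτ]
      have hτinv : ((τ⁻¹ : (Matrix (Fin m) (Fin m) k)ˣ) : Matrix (Fin m) (Fin m) k)
          = transvection i j (-c') := rfl
      rw [hτinv, tvuIJ_val, tvuIJ_val, transvection_mul_transvection_same _ _ hij]
      have harg : ρ * c' + -c' = c := by rw [hc'def]; field_simp; ring
      rw [harg]
    rw [hcomm]
    exact comm_mem X τ
  -- conclude
  have Tsub_le : Tsub k (Fin m) ≤ N := by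
    rw [Tsub, Subgroup.closure_le]
    rintro x ⟨i, j, c, hij, hx⟩
    have : x = tvuIJ i j c hij := Units.ext hx
    rw [this]; exact tv_mem i j c hij
  intro g
  have hdet : (g : Matrix (Fin m) (Fin m) k).det ≠ 0 := by
    have : IsUnit (g : Matrix (Fin m) (Fin m) k).det :=
      (isUnit_iff_isUnit_det _).1 g.isUnit
    exact this.ne_zero
  refine Matrix.diagonal_transvection_induction_of_det_ne_zero
    (P := fun M => ∀ h : (Matrix (Fin m) (Fin m) k)ˣ,
      (h : Matrix (Fin m) (Fin m) k) = M → h ∈ N) _ hdet ?_ ?_ ?_ g rfl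
  · intro d hd h hval
    obtain ⟨c, hc0, d', hd'0, hprod', hdec⟩ := diag_decomp d hd h hval
    rw [hdec]
    exact mul_mem (hZ (scU_mem_center c hc0)) (Tsub_le (diag_det_one_mem_Tsub d' hd'0 hprod'))
  · rintro ⟨i, j, hij, c⟩ h hval
    rw [Matrix.TransvectionStruct.toMatrix_mk] at hval
    have : h = tvuIJ i j c hij := Units.ext hval
    rw [this]; exact tv_mem i j c hij
  · intro M1 M2 h1det h2det ih1 ih2 h hval
    obtain ⟨u1, hu1⟩ := (isUnit_iff_isUnit_det M1).2 (isUnit_iff_ne_zero.2 h1det)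
    obtain ⟨u2, hu2⟩ := (isUnit_iff_isUnit_det M2).2 (isUnit_iff_ne_zero.2 h2det)
    have : h = u1 * u2 := Units.ext (by rw [hval, Units.val_mul, hu1, hu2])
    rw [this]; exact mul_mem (ih1 u1 hu1) (ih2 u2 hu2)

end Stmt19

/- STATEMENT 19: For k algebraically closed and n ≥ 1, the projective general linear
group PGL(n+1,k) = GL(n+1,k)/center is simple. -/
theorem stmt19 (k : Type*) [Field k] [IsAlgClosed k] (n : ℕ) (hn : 1 ≤ n) :
    IsSimpleGroup (GL (Fin (n + 1)) k ⧸ Subgroup.center (GL (Fin (n + 1)) k)) := by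
  classical
  have h01 : (0 : Fin (n + 1)) ≠ 1 := by
    have h1 : ((1 : Fin (n + 1)) : ℕ) = 1 := by
      rw [Fin.val_one']
      exact Nat.mod_eq_of_lt (by omega)
    intro hcon
    have := congrArg Fin.val hcon
    rw [h1] at this
    simp at this
  set G := GL (Fin (n + 1)) k with hG
  set g₀ : G := Stmt19.tvuIJ 0 1 (1 : k) h01 with hg₀
  set h₀ : G := Stmt19.tvuIJ 1 0 (1 : k) h01.symm with hh₀
  have hnoncomm : h₀ * g₀ ≠ g₀ * h₀ := by
    intro heq
    have hval : Matrix.transvection (1 : Fin (n + 1)) 0 (1 : k) * Matrix.transvection 0 1 1 =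
        Matrix.transvection (0 : Fin (n + 1)) 1 (1 : k) * Matrix.transvection 1 0 1 :=
      congrArg Units.val heq
    rw [Stmt19.tv_mul_tv 1 0 h01.symm 1 1, Stmt19.tv_mul_tv 0 1 h01 1 1] at hval
    have hent := congrArg (fun M => M 0 0) hval
    simp only [Matrix.add_apply, Matrix.one_apply, Matrix.single, Matrix.of_apply] at hent
    norm_num [h01, Ne.symm h01] at hent
    exact one_ne_zero (α := k) (by linear_combination -hent)
  have hg₀Z : g₀ ∉ Subgroup.center G := by
    intro hmem
    exact hnoncomm (Subgroup.mem_center_iff.1 hmem h₀)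
  haveI : Nontrivial (G ⧸ Subgroup.center G) := by
    refine ⟨⟨QuotientGroup.mk g₀, 1, ?_⟩⟩
    rw [Ne, QuotientGroup.eq_one_iff]
    exact hg₀Z
  refine ⟨fun H hH => ?_⟩
  set π := QuotientGroup.mk' (Subgroup.center G) with hπ
  have hπsurj : Function.Surjective π := QuotientGroup.mk'_surjective _
  set Nc := Subgroup.comap π H with hNc
  haveI hNcnormal : Nc.Normal := hH.comap π
  have hker : Subgroup.center G ≤ Nc := by
    intro z hz
    rw [hNc, Subgroup.mem_comap]
    have : π z = 1 := (QuotientGroup.eq_one_iff z).2 hz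
    rw [this]
    exact one_mem H
  by_cases hc : Nc ≤ Subgroup.center G
  · left
    have hmap : Subgroup.map π Nc = H := Subgroup.map_comap_eq_self_of_surjective hπsurj H
    rw [← hmap, Subgroup.map_eq_bot_iff]
    rw [QuotientGroup.ker_mk']
    exact hc
  · right
    have hall := Stmt19.key (k := k) (m := n + 1) (Nat.succ_pos n) Nc hNcnormal hker hc
    have hNctop : Nc = ⊤ := by
      ext g; simp [hall g]
    have hmap : Subgroup.map π Nc = H := Subgroup.map_comap_eq_self_of_surjective hπsurj H
    rw [← hmap, hNctop]
    exact Subgroup.map_top_of_surjective π hπsurj
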